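/- arXiv:0907.3771 — 9 statements merged into one kernel-verified Lean document; each statement's English description precedes it below -/
import Mathlib

section
/- Every infinite-dimensional affine subspace v + W of the space of finitely supported functions ℕ → F contains an infinite sequence (v + f_i)_{i ∈ ℕ} such that the support of v is entirely below the support of f_0, and the support of f_i is entirely below the support of f_{i+1} for all i. -/
theorem stmt2 {F : Type*} [Field F] (v : ℕ →₀ F) (W : Submodule F (ℕ →₀ F))
    (hW : ¬ Module.Finite F W) :
    ∃ f : ℕ → (ℕ →₀ F),
      (∀ i, f i ∈ W) ∧ (∀ i, f i ≠ 0) ∧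
      (∀ m ∈ v.support, ∀ n ∈ (f 0).support, m < n) ∧
      (∀ i, ∀ m ∈ (f i).support, ∀ n ∈ (f (i + 1)).support, m < n) := by
  have key : ∀ N : ℕ, ∃ f : ℕ →₀ F, f ∈ W ∧ f ≠ 0 ∧ ∀ n ∈ f.support, N < n := by
    intro N
    by_contra h
    push_neg at h
    apply hW
    set φ : W →ₗ[F] (Fin (N + 1) → F) :=
      LinearMap.pi (fun i : Fin (N + 1) => (Finsupp.lapply (i : ℕ)).comp W.subtype) with hφ
    have hker : ∀ m : W, φ m = 0 → m = 0 := by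
      intro m hm
      have hm' : ∀ i : Fin (N + 1), (m : ℕ →₀ F) (i : ℕ) = 0 := fun i =>
        congrFun hm i
      have hz : (m : ℕ →₀ F) = 0 := by
        by_contra h0
        obtain ⟨n, hn, hnN⟩ := h (m : ℕ →₀ F) m.2 h0
        have := hm' ⟨n, Nat.lt_succ_of_le hnN⟩
        exact Finsupp.mem_support_iff.mp hn this
      exact Subtype.ext hz
    have hinj : Function.Injective φ := fun a b hab => by
      have := hker (a - b) (by
        have e : φ (a - b) = φ a - φ b := φ.toAddMonoidHom.map_sub a b
        rw [e, hab, sub_self])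
      exact sub_eq_zero.mp this
    exact Module.Finite.of_injective φ hinj
  choose g hg1 hg2 hg3 using key
  set B : (ℕ →₀ F) → ℕ := fun x => x.support.sup id with hB
  refine ⟨fun i => Nat.rec (g (B v)) (fun _ prev => g (B prev)) i, ?_, ?_, ?_, ?_⟩
  · intro i; induction i with
    | zero => exact hg1 _
    | succ n ih => exact hg1 _
  · intro i; induction i with
    | zero => exact hg2 _
    | succ n ih => exact hg2 _
  · intro m hm n hn
    exact lt_of_le_of_lt (Finset.le_sup (f := id) hm) (hg3 _ _ hn)
  · intro i m hm n hn
    exact lt_of_le_of_lt (Finset.le_sup (f := id) hm) (hg3 _ _ hn)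
end

section
/- Let F be a field with more than 2 elements and let f, g be nonzero finitely supported functions ℕ → F with max(supp f) < min(supp g). If osc denotes the oscillation function, then osc(f+g) ≥ osc(f) + osc(g), with osc(f+g) = osc(f) + osc(g) + 1 when f(max supp f) ≠ g(min supp g), and osc(f+g) = osc(f) + osc(g) when these values are equal. -/
/-- The oscillation of a finitely supported function `f : ℕ →₀ F`:
the number of indices `i` such that, listing the support of `f` in increasing
order as `x₀ < x₁ < …`, we have `f xᵢ ≠ f xᵢ₊₁`. -/
def osc {F : Type*} [Field F] [DecidableEq F] (f : ℕ →₀ F) : ℕ :=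
  let l := f.support.sort (· ≤ ·)
  ((l.zip l.tail).filter (fun p => decide (f p.1 ≠ f p.2))).length

private lemma pairs_append {α : Type*} (l₁ : List α) :
    ∀ (l₂ : List α) (h₁ : l₁ ≠ []) (h₂ : l₂ ≠ []),
    (l₁ ++ l₂).zip (l₁ ++ l₂).tail =
      l₁.zip l₁.tail ++ (l₁.getLast h₁, l₂.head h₂) :: l₂.zip l₂.tail := by
  induction l₁ with
  | nil => intro _ h₁ _; exact absurd rfl h₁
  | cons a t ih =>
    intro l₂ h₁ h₂
    cases t with
    | nil =>
      cases l₂ with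
      | nil => exact absurd rfl h₂
      | cons b r => simp
    | cons b s =>
      have := ih (l₂ := l₂) (by simp) h₂
      simp only [List.cons_append, List.tail_cons] at this ⊢
      rw [List.zip_cons_cons, this]
      simp [List.getLast]

private lemma sort_union_of_lt (s t : Finset ℕ)
    (h : ∀ m ∈ s, ∀ n ∈ t, m < n) :
    (s ∪ t).sort (· ≤ ·) = s.sort (· ≤ ·) ++ t.sort (· ≤ ·) := by
  have hdisj : Disjoint s t := by
    rw [Finset.disjoint_left]
    intro a ha hat
    exact lt_irrefl a (h a ha a hat)
  apply List.Perm.eq_of_pairwise' (r := (· ≤ ·)) (Finset.pairwise_sort _ _) ?_ ?_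
  · rw [List.pairwise_append]
    refine ⟨Finset.pairwise_sort _ _, Finset.pairwise_sort _ _, ?_⟩
    intro a ha b hb
    exact (h a (by simpa using ha) b (by simpa using hb)).le
  · refine (Finset.sort_perm_toList _ _).trans (.trans ?_
      ((Finset.sort_perm_toList s (· ≤ ·)).append (Finset.sort_perm_toList t (· ≤ ·))).symm)
    rw [← Multiset.coe_eq_coe]
    rw [← Finset.disjUnion_eq_union s t hdisj]
    simp only [Finset.toList]
    simp only [Finset.disjUnion]
    rw [show ((s.val.toList ++ t.val.toList : List ℕ) : Multiset ℕ)
        = (↑s.val.toList + ↑t.val.toList : Multiset ℕ) from rfl]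
    simp [Multiset.coe_toList]

theorem stmt5 {F : Type*} [Field F] [DecidableEq F]
    (hF : ∃ a b c : F, a ≠ b ∧ a ≠ c ∧ b ≠ c)
    (f g : ℕ →₀ F) (hf : f ≠ 0) (hg : g ≠ 0)
    (hlt : ∀ m ∈ f.support, ∀ n ∈ g.support, m < n) :
    osc (f + g) ≥ osc f + osc g ∧
    (f (f.support.max' (Finsupp.support_nonempty_iff.mpr hf)) ≠
        g (g.support.min' (Finsupp.support_nonempty_iff.mpr hg)) →
      osc (f + g) = osc f + osc g + 1) ∧
    (f (f.support.max' (Finsupp.support_nonempty_iff.mpr hf)) =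
        g (g.support.min' (Finsupp.support_nonempty_iff.mpr hg)) →
      osc (f + g) = osc f + osc g) := by
  classical
  have hfne : f.support.Nonempty := Finsupp.support_nonempty_iff.mpr hf
  have hgne : g.support.Nonempty := Finsupp.support_nonempty_iff.mpr hg
  have hdisj : Disjoint f.support g.support := by
    rw [Finset.disjoint_left]
    intro a ha hat
    exact lt_irrefl a (hlt a ha a hat)
  set lf := f.support.sort (· ≤ ·) with hlf
  set lg := g.support.sort (· ≤ ·) with hlg
  have hlfne : lf ≠ [] := by
    simp [hlf, ← List.length_pos_iff_ne_nil, Finset.card_pos, hfne]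
  have hlgne : lg ≠ [] := by
    simp [hlg, ← List.length_pos_iff_ne_nil, Finset.card_pos, hgne]
  have hsupp : (f + g).support = f.support ∪ g.support := Finsupp.support_add_eq hdisj
  have hsort : (f + g).support.sort (· ≤ ·) = lf ++ lg := by
    rw [hsupp]; exact sort_union_of_lt _ _ hlt
  -- values
  have hvf : ∀ x ∈ f.support, (f + g) x = f x := by
    intro x hx
    have : g x = 0 := by
      by_contra hne
      exact lt_irrefl x (hlt x hx x (Finsupp.mem_support_iff.mpr hne))
    simp [Finsupp.add_apply, this]
  have hvg : ∀ x ∈ g.support, (f + g) x = g x := by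
    intro x hx
    have : f x = 0 := by
      by_contra hne
      exact lt_irrefl x (hlt x (Finsupp.mem_support_iff.mpr hne) x hx)
    simp [Finsupp.add_apply, this]
  -- the junction values
  have hA : lf.getLast hlfne = f.support.max' hfne := by
    rw [List.getLast_eq_getElem]
    exact Finset.sorted_last_eq_max'_aux _ _ _
  have hB : lg.head hlgne = g.support.min' hgne := by
    rw [List.head_eq_getElem]
    exact Finset.sorted_zero_eq_min'_aux _ _ _
  have key : osc (f + g) = osc f + osc g +
      (if f (f.support.max' hfne) ≠ g (g.support.min' hgne) then 1 else 0) := by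
    unfold osc
    simp only [hsort]
    rw [pairs_append lf lg hlfne hlgne]
    rw [List.filter_append, List.length_append]
    have memf : ∀ p ∈ lf.zip lf.tail, p.1 ∈ f.support ∧ p.2 ∈ f.support := by
      intro p hp
      obtain ⟨h1, h2⟩ := List.of_mem_zip (a := p.1) (b := p.2) (by simpa using hp)
      exact ⟨(Finset.mem_sort _).1 h1, (Finset.mem_sort _).1 (List.mem_of_mem_tail h2)⟩
    have memg : ∀ p ∈ lg.zip lg.tail, p.1 ∈ g.support ∧ p.2 ∈ g.support := by
      intro p hp
      obtain ⟨h1, h2⟩ := List.of_mem_zip (a := p.1) (b := p.2) (by simpa using hp)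
      exact ⟨(Finset.mem_sort _).1 h1, (Finset.mem_sort _).1 (List.mem_of_mem_tail h2)⟩
    have e1 : (lf.zip lf.tail).filter (fun p => decide ((f+g) p.1 ≠ (f+g) p.2)) =
        (lf.zip lf.tail).filter (fun p => decide (f p.1 ≠ f p.2)) := by
      apply List.filter_congr
      intro p hp
      rw [hvf _ (memf p hp).1, hvf _ (memf p hp).2]
    have e2 : (lg.zip lg.tail).filter (fun p => decide ((f+g) p.1 ≠ (f+g) p.2)) =
        (lg.zip lg.tail).filter (fun p => decide (g p.1 ≠ g p.2)) := by
      apply List.filter_congr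
      intro p hp
      rw [hvg _ (memg p hp).1, hvg _ (memg p hp).2]
    have e3 : (f+g) (lf.getLast hlfne) = f (f.support.max' hfne) := by
      rw [hA]; exact hvf _ (f.support.max'_mem hfne)
    have e4 : (f+g) (lg.head hlgne) = g (g.support.min' hgne) := by
      rw [hB]; exact hvg _ (g.support.min'_mem hgne)
    rw [e1, List.filter_cons, e3, e4, e2]
    simp only [← hlf, ← hlg]
    by_cases hif : f (f.support.max' hfne) ≠ g (g.support.min' hgne)
    · rw [if_pos (by simpa using hif), if_pos hif]
      simp only [List.length_cons]
      omega
    · rw [if_neg (by simpa using hif), if_neg hif]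
      omega
  refine ⟨?_, ?_, ?_⟩
  · rw [key]; omega
  · intro h; rw [key, if_pos h]
  · intro h; rw [key, if_neg (by simp [h])]; omega
end

section
/- Let F be a field with |F| > 2 and let A be an infinite-dimensional affine subspace of the space of finitely supported functions ℕ → F. Then the range of the oscillation function restricted to A contains arbitrarily long intervals of consecutive integers; in particular, for every n there exist elements of A whose oscillation values cover an interval of length n. -/
namespace OscAux

variable {F : Type*} [Field F] [DecidableEq F]

/-- Oscillation along an arbitrary list. -/
def oscL (v : ℕ → F) (l : List ℕ) : ℕ :=
  ((l.zip l.tail).filter (fun p => decide (v p.1 ≠ v p.2))).length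

lemma osc_eq_oscL (f : ℕ →₀ F) : osc f = oscL f (f.support.sort (· ≤ ·)) := rfl

lemma zip_tail_append (a : List ℕ) (x y : ℕ) (b : List ℕ) :
    ((a ++ [x]) ++ y :: b).zip (((a ++ [x]) ++ y :: b).tail) =
      ((a ++ [x]).zip ((a ++ [x]).tail)) ++ (x, y) :: ((y :: b).zip ((y :: b).tail)) := by
  induction a with
  | nil => simp
  | cons z a' ih =>
      cases a' with
      | nil => simp
      | cons u a'' =>
          simp only [List.cons_append, List.tail_cons, List.zip_cons_cons] at ih ⊢
          rw [ih]

lemma oscL_append (v : ℕ → F) (a : List ℕ) (x y : ℕ) (b : List ℕ) :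
    oscL v ((a ++ [x]) ++ y :: b) =
      oscL v (a ++ [x]) + oscL v (y :: b) + (if v x = v y then 0 else 1) := by
  unfold oscL
  rw [zip_tail_append, List.filter_append, List.filter_cons, List.length_append]
  by_cases h : v x = v y <;> simp [h] <;> omega

lemma oscL_congr {v u : ℕ → F} {l : List ℕ} (h : ∀ i ∈ l, v i = u i) :
    oscL v l = oscL u l := by
  unfold oscL
  congr 1
  apply List.filter_congr
  intro p hp
  obtain ⟨h1, h2⟩ := List.of_mem_zip hp
  rw [h _ h1, h _ (List.mem_of_mem_tail h2)]

lemma disjoint_of_lt {s t : Finset ℕ} (hlt : ∀ i ∈ s, ∀ j ∈ t, i < j) : Disjoint s t := by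
  rw [Finset.disjoint_left]
  intro a ha hat
  exact lt_irrefl a (hlt a ha a hat)

lemma sort_union (s t : Finset ℕ) (hlt : ∀ i ∈ s, ∀ j ∈ t, i < j) :
    (s ∪ t).sort (· ≤ ·) = s.sort (· ≤ ·) ++ t.sort (· ≤ ·) := by
  have hdisj : Disjoint s t := disjoint_of_lt hlt
  apply (fun hp h1 h2 => List.Perm.eq_of_pairwise' (r := (· ≤ · : ℕ → ℕ → Prop)) h1 h2 hp)
  · rw [← Multiset.coe_eq_coe]
    have h2 : (s ∪ t).val = s.val + t.val := by
      rw [← Finset.disjUnion_eq_union s t hdisj]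
      rfl
    show ((s ∪ t).sort (· ≤ ·) : Multiset ℕ) = _
    rw [Finset.sort_eq, h2, ← Multiset.coe_add, Finset.sort_eq, Finset.sort_eq]
  · exact Finset.pairwise_sort _ _
  · show List.Pairwise _ _
    refine List.pairwise_append.2 ⟨Finset.pairwise_sort _ _, Finset.pairwise_sort _ _, ?_⟩
    intro i hi j hj
    exact le_of_lt (hlt i ((Finset.mem_sort _).1 hi) j ((Finset.mem_sort _).1 hj))

/-- The largest element of the support (0 if empty). -/
def lastIdx (f : ℕ →₀ F) : ℕ := (f.support.sort (· ≤ ·)).getLast?.getD 0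

/-- The smallest element of the support (0 if empty). -/
def headIdx (f : ℕ →₀ F) : ℕ := (f.support.sort (· ≤ ·)).head?.getD 0

lemma sort_ne_nil {f : ℕ →₀ F} (hf : f ≠ 0) : f.support.sort (· ≤ ·) ≠ [] := by
  obtain ⟨x, hx⟩ := Finsupp.support_nonempty_iff.2 hf
  intro h
  have hmem : x ∈ f.support.sort (· ≤ ·) := (Finset.mem_sort _).2 hx
  rw [h] at hmem
  exact List.not_mem_nil hmem

lemma lastIdx_spec {f : ℕ →₀ F} (hf : f ≠ 0) :
    (∃ a, f.support.sort (· ≤ ·) = a ++ [lastIdx f]) ∧ lastIdx f ∈ f.support := by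
  obtain h | ⟨L, b, hL⟩ := List.eq_nil_or_concat (f.support.sort (· ≤ ·))
  · exact absurd h (sort_ne_nil hf)
  · rw [List.concat_eq_append] at hL
    have hlb : lastIdx f = b := by
      unfold lastIdx
      rw [hL, List.getLast?_concat]
      rfl
    constructor
    · exact ⟨L, by rw [hL, hlb]⟩
    · rw [← Finset.mem_sort (· ≤ · : ℕ → ℕ → Prop), hL, hlb]
      simp

lemma headIdx_spec {f : ℕ →₀ F} (hf : f ≠ 0) :
    (∃ b, f.support.sort (· ≤ ·) = headIdx f :: b) ∧ headIdx f ∈ f.support := by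
  obtain ⟨h, tl, hL⟩ := List.exists_cons_of_ne_nil (sort_ne_nil hf)
  have hlb : headIdx f = h := by
    unfold headIdx
    rw [hL]
    rfl
  constructor
  · exact ⟨tl, by rw [hL, hlb]⟩
  · rw [← Finset.mem_sort (· ≤ · : ℕ → ℕ → Prop), hL, hlb]
    simp

lemma osc_add (f g : ℕ →₀ F) (hf : f ≠ 0) (hg : g ≠ 0)
    (hlt : ∀ i ∈ f.support, ∀ j ∈ g.support, i < j) :
    osc (f + g) = osc f + osc g + (if f (lastIdx f) = g (headIdx g) then 0 else 1) := by
  obtain ⟨⟨a, ha⟩, hxmem⟩ := lastIdx_spec hf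
  obtain ⟨⟨b, hb⟩, hymem⟩ := headIdx_spec hg
  have hdisj : Disjoint f.support g.support := disjoint_of_lt hlt
  have hsupp : (f + g).support = f.support ∪ g.support := Finsupp.support_add_eq hdisj
  have hgz : ∀ i ∈ f.support, g i = 0 := by
    intro i hi
    by_contra h
    exact lt_irrefl i (hlt i hi i (Finsupp.mem_support_iff.2 h))
  have hfz : ∀ j ∈ g.support, f j = 0 := by
    intro j hj
    rw [← Finsupp.notMem_support_iff]
    intro h
    exact lt_irrefl j (hlt j h j hj)
  have hsort : (f + g).support.sort (· ≤ ·) = (a ++ [lastIdx f]) ++ (headIdx g :: b) := by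
    rw [hsupp, sort_union _ _ hlt, ha, hb]
  rw [osc_eq_oscL, hsort, oscL_append]
  have h1 : oscL (⇑(f + g)) (a ++ [lastIdx f]) = osc f := by
    rw [osc_eq_oscL, ha]
    apply oscL_congr
    intro i hi
    have hi' : i ∈ f.support := (Finset.mem_sort _).1 (by rw [ha]; exact hi)
    simp [hgz i hi']
  have h2 : oscL (⇑(f + g)) (headIdx g :: b) = osc g := by
    rw [osc_eq_oscL, hb]
    apply oscL_congr
    intro j hj
    have hj' : j ∈ g.support := (Finset.mem_sort _).1 (by rw [hb]; exact hj)
    simp [hfz j hj']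
  have h3 : (f + g) (lastIdx f) = f (lastIdx f) := by simp [hgz _ hxmem]
  have h4 : (f + g) (headIdx g) = g (headIdx g) := by simp [hfz _ hymem]
  rw [h1, h2, h3, h4]

lemma osc_smul {t : F} (ht : t ≠ 0) (w : ℕ →₀ F) : osc (t • w) = osc w := by
  rw [osc_eq_oscL, osc_eq_oscL, Finsupp.support_smul_eq ht]
  unfold oscL
  congr 1
  apply List.filter_congr
  intro p hp
  rw [decide_eq_decide]
  simp only [Finsupp.smul_apply, smul_eq_mul, Ne]
  rw [mul_right_inj' ht]

lemma headIdx_smul {t : F} (ht : t ≠ 0) (w : ℕ →₀ F) : headIdx (t • w) = headIdx w := by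
  unfold headIdx
  rw [Finsupp.support_smul_eq ht]

lemma exists_ne_ne (hF : ∃ a b c : F, a ≠ b ∧ a ≠ c ∧ b ≠ c) (u v : F) :
    ∃ t : F, t ≠ u ∧ t ≠ v := by
  obtain ⟨a, b, c, hab, hac, hbc⟩ := hF
  by_cases hau : a = u
  · by_cases hbv : b = v
    · exact ⟨c, by rw [← hau]; exact hac.symm, by rw [← hbv]; exact hbc.symm⟩
    · exact ⟨b, by rw [← hau]; exact hab.symm, hbv⟩
  · by_cases hav : a = v
    · by_cases hbu : b = u
      · exact ⟨c, by rw [← hbu]; exact hbc.symm, by rw [← hav]; exact hac.symm⟩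
      · exact ⟨b, hbu, by rw [← hav]; exact hab.symm⟩
    · exact ⟨a, hau, hav⟩

lemma nonzero_add {f w : ℕ →₀ F} (hf : f ≠ 0) (hw : w ≠ 0)
    (hlt : ∀ i ∈ f.support, ∀ j ∈ w.support, i < j) : f + w ≠ 0 := by
  rw [← Finsupp.support_nonempty_iff, Finsupp.support_add_eq (disjoint_of_lt hlt)]
  obtain ⟨x, hx⟩ := Finsupp.support_nonempty_iff.2 hf
  exact ⟨x, Finset.mem_union_left _ hx⟩

lemma step (hF : ∃ a b c : F, a ≠ b ∧ a ≠ c ∧ b ≠ c) (f w : ℕ →₀ F) (hf : f ≠ 0) (hw : w ≠ 0)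
    (hlt : ∀ i ∈ f.support, ∀ j ∈ w.support, i < j) (ε : ℕ) (hε : ε ≤ 1) :
    ∃ t : F, t ≠ 0 ∧ f + t • w ≠ 0 ∧ osc (f + t • w) = osc f + osc w + ε := by
  have hxmem : lastIdx f ∈ f.support := (lastIdx_spec hf).2
  have hymem : headIdx w ∈ w.support := (headIdx_spec hw).2
  have hxne : f (lastIdx f) ≠ 0 := Finsupp.mem_support_iff.1 hxmem
  have hyne : w (headIdx w) ≠ 0 := Finsupp.mem_support_iff.1 hymem
  have main : ∀ t : F, t ≠ 0 → f + t • w ≠ 0 ∧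
      osc (f + t • w) = osc f + osc w +
        (if f (lastIdx f) = t * w (headIdx w) then 0 else 1) := by
    intro t ht
    have hw' : t • w ≠ 0 := smul_ne_zero ht hw
    have hsupp : (t • w).support = w.support := Finsupp.support_smul_eq ht
    have hlt' : ∀ i ∈ f.support, ∀ j ∈ (t • w).support, i < j := by
      rw [hsupp]; exact hlt
    refine ⟨nonzero_add hf hw' hlt', ?_⟩
    rw [osc_add f (t • w) hf hw' hlt', osc_smul ht, headIdx_smul ht]
    have happ : (t • w) (headIdx w) = t * w (headIdx w) := by
      simp [Finsupp.smul_apply, smul_eq_mul]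
    rw [happ]
  interval_cases ε
  · refine ⟨f (lastIdx f) / w (headIdx w), div_ne_zero hxne hyne,
      (main _ (div_ne_zero hxne hyne)).1, ?_⟩
    rw [(main _ (div_ne_zero hxne hyne)).2, div_mul_cancel₀ _ hyne]
    simp
  · obtain ⟨t, ht0, htd⟩ := exists_ne_ne hF 0 (f (lastIdx f) / w (headIdx w))
    refine ⟨t, ht0, (main t ht0).1, ?_⟩
    rw [(main t ht0).2]
    have hcond : ¬ (f (lastIdx f) = t * w (headIdx w)) := by
      intro h
      apply htd
      rw [eq_div_iff hyne]
      exact h.symm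
    rw [if_neg hcond]

lemma exists_high (W : Submodule F (ℕ →₀ F)) (hW : ¬ Module.Finite F W) (N : ℕ) :
    ∃ w ∈ W, w ≠ 0 ∧ ∀ i ∈ w.support, N < i := by
  by_contra hcon
  push_neg at hcon
  apply hW
  let L : (ℕ →₀ F) →ₗ[F] (Fin (N + 1) → F) := LinearMap.pi (fun i => Finsupp.lapply i.val)
  have hker : LinearMap.ker (L.comp W.subtype) = ⊥ := by
    rw [eq_bot_iff]
    rintro ⟨w, hwW⟩ hker
    rw [LinearMap.mem_ker] at hker
    have hz : ∀ i : Fin (N + 1), w i.val = 0 := by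
      intro i
      have := congrFun hker i
      simpa [L] using this
    rw [Submodule.mem_bot, Submodule.mk_eq_zero]
    by_contra hne
    obtain ⟨i, himem, hiN⟩ := hcon w hwW hne
    exact (Finsupp.mem_support_iff.1 himem) (hz ⟨i, Nat.lt_succ_of_le hiN⟩)
  have hinj : Function.Injective (L.comp W.subtype) := (LinearMap.ker_eq_bot (M := W)).mp hker
  exact FiniteDimensional.of_injective (V := W) (L.comp W.subtype) hinj

end OscAux

theorem stmt6 {F : Type*} [Field F] [DecidableEq F]
    (hF : ∃ a b c : F, a ≠ b ∧ a ≠ c ∧ b ≠ c)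
    (v : ℕ →₀ F) (W : Submodule F (ℕ →₀ F)) (hW : ¬ Module.Finite F W) :
    ∀ n : ℕ, ∃ m : ℕ, ∀ j ≤ n, ∃ w ∈ W, osc (v + w) = m + j := by
  classical
  suffices h : ∀ n : ℕ, ∃ m : ℕ, ∀ j ≤ n, ∃ w ∈ W, (v + w ≠ 0) ∧ osc (v + w) = m + j by
    intro n
    obtain ⟨m, hm⟩ := h n
    refine ⟨m, fun j hj => ?_⟩
    obtain ⟨w, hwW, _, hosc⟩ := hm j hj
    exact ⟨w, hwW, hosc⟩
  intro n
  induction n with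
  | zero =>
      obtain ⟨w, hwW, hw0, hwhigh⟩ := OscAux.exists_high W hW (v.support.sup id)
      have hlt : ∀ i ∈ v.support, ∀ j ∈ w.support, i < j := fun i hi j hj =>
        lt_of_le_of_lt (Finset.le_sup (f := id) hi) (hwhigh j hj)
      have hne : v + w ≠ 0 := by
        rw [← Finsupp.support_nonempty_iff,
          Finsupp.support_add_eq (OscAux.disjoint_of_lt hlt)]
        obtain ⟨x, hx⟩ := Finsupp.support_nonempty_iff.2 hw0
        exact ⟨x, Finset.mem_union_right _ hx⟩
      refine ⟨osc (v + w), fun j hj => ?_⟩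
      have hj0 : j = 0 := Nat.le_zero.1 hj
      subst hj0
      exact ⟨w, hwW, hne, by simp⟩
  | succ n ih =>
      obtain ⟨m, hm⟩ := ih
      have hm' : ∀ j, ∃ w, w ∈ W ∧ (j ≤ n → (v + w ≠ 0 ∧ osc (v + w) = m + j)) := by
        intro j
        by_cases hj : j ≤ n
        · obtain ⟨w, h1, h2⟩ := hm j hj
          exact ⟨w, h1, fun _ => h2⟩
        · exact ⟨0, W.zero_mem, fun h => absurd h hj⟩
      choose ws hws1 hws2 using hm'
      obtain ⟨wh, hwhW, hwh0, hwhigh⟩ := OscAux.exists_high W hW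
        ((Finset.range (n + 1)).sup fun j => (v + ws j).support.sup id)
      have key : ∀ j0 ≤ n, ∀ ε ≤ 1, ∃ w ∈ W, v + w ≠ 0 ∧
          osc (v + w) = (m + osc wh) + (j0 + ε) := by
        intro j0 hj0 ε hε
        obtain ⟨hne, hosc⟩ := hws2 j0 hj0
        have hlt : ∀ i ∈ (v + ws j0).support, ∀ k ∈ wh.support, i < k := by
          intro i hi k hk
          refine lt_of_le_of_lt (le_trans (Finset.le_sup (f := id) hi) ?_) (hwhigh k hk)
          exact Finset.le_sup (f := fun j => (v + ws j).support.sup id)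
            (Finset.mem_range.2 (Nat.lt_succ_of_le hj0))
        obtain ⟨t, ht0, hne', hosc'⟩ := OscAux.step hF (v + ws j0) wh hne hwh0 hlt ε hε
        refine ⟨ws j0 + t • wh, W.add_mem (hws1 j0) (W.smul_mem t hwhW), ?_, ?_⟩
        · rwa [← add_assoc]
        · rw [← add_assoc, hosc', hosc]
          omega
      refine ⟨m + osc wh, fun j hj => ?_⟩
      by_cases hjn : j ≤ n
      · obtain ⟨w, hwW, h1, h2⟩ := key j hjn 0 (by omega)
        exact ⟨w, hwW, h1, by omega⟩
      · have hj' : j = n + 1 := by omega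
        obtain ⟨w, hwW, h1, h2⟩ := key n le_rfl 1 le_rfl
        exact ⟨w, hwW, h1, by omega⟩
end

section
/- A countable-dimensional vector space V over a field F with |F| > 2 is divisible: there exists a partition of V into two sets P₀, P₁ such that for no affine embedding ε : V → V (injective affine map) is ε(V) contained in P₀ or in P₁. -/
theorem stmt7 {F V : Type*} [Field F] [AddCommGroup V] [Module F V]
    (hdim : Module.rank F V = Cardinal.aleph0)
    (hF : ∃ a b c : F, a ≠ b ∧ a ≠ c ∧ b ≠ c) :
    ∃ P : Set V, ∀ (w : V) (ρ : V →ₗ[F] V), Function.Injective ρ →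
      ¬ (Set.range (fun v => w + ρ v) ⊆ P) ∧
      ¬ (Set.range (fun v => w + ρ v) ⊆ Pᶜ) := by
  classical
  -- a scalar different from 0 and 1
  obtain ⟨c, hc0, hc1⟩ : ∃ c : F, c ≠ 0 ∧ c ≠ 1 := by
    obtain ⟨a, b, c, hab, hac, hbc⟩ := hF
    by_contra h
    push_neg at h
    have key : ∀ x : F, x = 0 ∨ x = 1 := fun x => or_iff_not_imp_left.mpr (h x)
    rcases key a with ha | ha <;> rcases key b with hb | hb <;>
      rcases key c with hcx | hcx <;> simp_all
  -- a basis indexed by ℕ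
  obtain ⟨b⟩ : Nonempty (Module.Basis ℕ F V) := by
    have hcard : Cardinal.mk (Module.Basis.ofVectorSpaceIndex F V) = Cardinal.aleph0 := by
      rw [← hdim]
      exact Module.Basis.mk_eq_rank'' (Module.Basis.ofVectorSpace F V)
    have h1 : Countable (Module.Basis.ofVectorSpaceIndex F V) ∧ Infinite (Module.Basis.ofVectorSpaceIndex F V) :=
      ⟨Cardinal.mk_le_aleph0_iff.mp hcard.le, Cardinal.infinite_iff.mpr hcard.ge⟩
    obtain ⟨d⟩ := nonempty_denumerable_iff.mpr h1
    exact ⟨(Module.Basis.ofVectorSpace F V).reindex d.eqv⟩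
  -- leading coefficient
  set lead : V → F := fun v => b.repr v ((b.repr v).support.sup id) with hlead
  refine ⟨{v | lead v = 1}, fun w ρ hρ => ?_⟩
  set n : ℕ := (b.repr w).support.sup id with hn
  -- there is a vector in the range of ρ with support going beyond n
  have hbig : ∃ v₀ : V, n < (b.repr (ρ v₀)).support.sup id := by
    by_contra h
    push_neg at h
    -- then range ρ is contained in a finite-dimensional span
    have hsub : LinearMap.range ρ ≤ Submodule.span F (⇑b '' (Set.Iic n)) := by
      rintro x ⟨v₁, rfl⟩
      have h1 : ρ v₁ ∈ Submodule.span F (⇑b '' ↑(b.repr (ρ v₁)).support) :=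
        Module.Basis.mem_span_repr_support b (ρ v₁)
      refine Submodule.span_mono (Set.image_mono ?_) h1
      intro j hj
      have : j ≤ (b.repr (ρ v₁)).support.sup id := Finset.le_sup (f := id) hj
      exact this.trans (h _)
    have h2 : Module.rank F (LinearMap.range ρ) = Cardinal.aleph0 := by
      rw [← (LinearEquiv.ofInjective ρ hρ).rank_eq, hdim]
    have h3 : Module.rank F (Submodule.span F (⇑b '' (Set.Iic n))) < Cardinal.aleph0 := by
      refine lt_of_le_of_lt (rank_span_le _) ?_
      exact ((Set.finite_Iic n).image _).lt_aleph0
    have := Submodule.rank_mono hsub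
    rw [h2] at this
    exact absurd (this.trans_lt h3) (lt_irrefl _)
  obtain ⟨v₀, hv₀⟩ := hbig
  set u : V := ρ v₀ with hu
  set m : ℕ := (b.repr u).support.sup id with hm
  have hum : b.repr u m ≠ 0 := by
    have hne : (b.repr u).support.Nonempty := by
      rcases Finset.eq_empty_or_nonempty (b.repr u).support with h | h
      · rw [hm, h] at hv₀; simp at hv₀
      · exact h
    have : m ∈ (b.repr u).support := by
      rw [hm, ← Finset.sup'_eq_sup hne id, ← Finset.max'_eq_sup']
      exact Finset.max'_mem _ hne
    exact Finsupp.mem_support_iff.mp this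
  -- key computation: lead (w + t • u) = t * b.repr u m for t ≠ 0
  have key : ∀ t : F, t ≠ 0 → lead (w + t • u) = t * b.repr u m := by
    intro t ht
    have hrepr : b.repr (w + t • u) = b.repr w + t • b.repr u := by
      rw [map_add, map_smul]
    have hwm : ∀ j, m < j ∨ j = m → b.repr w j = 0 := by
      intro j hj
      by_contra hne
      have : j ≤ n := Finset.le_sup (f := id) (Finsupp.mem_support_iff.mpr hne)
      rcases hj with hj | hj
      · omega
      · omega
    have hval : ∀ j, (b.repr (w + t • u)) j = b.repr w j + t * b.repr u j := by
      intro j; rw [hrepr]; simp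
    have hvalm : (b.repr (w + t • u)) m = t * b.repr u m := by
      rw [hval, hwm m (Or.inr rfl), zero_add]
    have hmem : m ∈ (b.repr (w + t • u)).support := by
      rw [Finsupp.mem_support_iff, hvalm]
      exact mul_ne_zero ht hum
    have hsup : (b.repr (w + t • u)).support.sup id = m := by
      apply le_antisymm
      · apply Finset.sup_le
        intro j hj
        by_contra hlt
        push_neg at hlt
        have hj' := Finsupp.mem_support_iff.mp hj
        have h1 : b.repr w j = 0 := hwm j (Or.inl (by simpa using hlt))
        have h2 : b.repr u j = 0 := by
          by_contra hne
          have : j ≤ m := Finset.le_sup (f := id) (Finsupp.mem_support_iff.mpr hne)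
          simp at hlt; omega
        rw [hval, h1, h2, mul_zero, add_zero] at hj'
        exact hj' rfl
      · exact Finset.le_sup (f := id) hmem
    rw [hlead]
    simp only [hsup]
    exact hvalm
  have humm : b.repr u m ≠ 0 := hum
  constructor
  · -- not ⊆ P : exhibit a point with lead = c ≠ 1
    intro hsub
    have hx : w + ρ ((c * (b.repr u m)⁻¹) • v₀) ∈ {v | lead v = 1} :=
      hsub ⟨(c * (b.repr u m)⁻¹) • v₀, rfl⟩
    rw [Set.mem_setOf_eq] at hx
    rw [map_smul, ← hu] at hx
    rw [key _ (mul_ne_zero hc0 (inv_ne_zero humm))] at hx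
    rw [mul_assoc, inv_mul_cancel₀ humm, mul_one] at hx
    exact hc1 hx
  · -- not ⊆ Pᶜ : exhibit a point with lead = 1
    intro hsub
    have hx : w + ρ (((b.repr u m)⁻¹) • v₀) ∈ {v | lead v = 1}ᶜ :=
      hsub ⟨((b.repr u m)⁻¹) • v₀, rfl⟩
    apply hx
    rw [Set.mem_setOf_eq, map_smul, ← hu, key _ (inv_ne_zero humm),
      inv_mul_cancel₀ humm]
end

section
/- Let V be a vector space of countably infinite dimension over an infinite field F. Then there exists a set A ⊆ V such that A contains no three distinct collinear points (no affine line meets A in more than two points) and the complement V \ A contains no affine line. In particular, V can be partitioned into two sets neither of which contains an affine line. -/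
open Cardinal Set

universe u v

section Aux

variable (F : Type u) {V : Type v} [Field F] [AddCommGroup V] [Module F V]

/-- The affine line through `v` with direction `w`. -/
def aline (v w : V) : Set V := Set.range (fun t : F => v + t • w)

variable {F}

lemma aline_eq {v w x y : V} (hx : x ∈ aline F v w) (hy : y ∈ aline F v w)
    (hxy : x ≠ y) : aline F v w = aline F x (y - x) := by
  obtain ⟨a, ha'⟩ := hx
  obtain ⟨b, hb'⟩ := hy
  have ha : v + a • w = x := ha'
  have hb : v + b • w = y := hb'
  have hab : b - a ≠ 0 := by
    intro h
    apply hxy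
    rw [← ha, ← hb, sub_eq_zero.mp h]
  have hdiff : y - x = (b - a) • w := by
    rw [← ha, ← hb, sub_smul]; abel
  ext z
  constructor
  · rintro ⟨t, rfl⟩
    refine ⟨(t - a) / (b - a), ?_⟩
    show x + ((t - a) / (b - a)) • (y - x) = v + t • w
    rw [hdiff, smul_smul, div_mul_cancel₀ _ hab, ← ha, sub_smul]
    abel
  · rintro ⟨s, rfl⟩
    refine ⟨a + s * (b - a), ?_⟩
    show v + (a + s * (b - a)) • w = x + s • (y - x)
    rw [hdiff, smul_smul, ← ha, add_smul]
    abel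

lemma mem_aline_self (v w : V) : v ∈ aline F v w := ⟨0, by simp⟩

lemma aline_inj {v w : V} (hw : w ≠ 0) :
    Function.Injective (fun t : F => v + t • w) := by
  intro a b h
  by_contra hne
  have hc : a - b ≠ 0 := sub_ne_zero.mpr hne
  have hab : a • w = b • w := add_left_cancel h
  have h0 : (a - b) • w = 0 := by rw [sub_smul, hab, sub_self]
  apply hw
  rw [← inv_smul_smul₀ hc w, h0, smul_zero]

lemma exists_fresh [Infinite F] {v w : V} (hw : w ≠ 0) (P : Set V)
    (hP : Cardinal.lift.{u} #P < Cardinal.lift.{v} #F)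
    (hdisj : ∀ p ∈ P, p ∉ aline F v w) :
    ∃ z ∈ aline F v w, ∀ p ∈ P, ∀ q ∈ P, p ≠ q → z ∉ aline F p (q - p) := by
  by_contra hcon
  push_neg at hcon
  have hsel : ∀ z : (aline F v w), ∃ pq : P × P, (pq.1 : V) ≠ (pq.2 : V) ∧
      (z : V) ∈ aline F (pq.1 : V) ((pq.2 : V) - (pq.1 : V)) := by
    intro z
    obtain ⟨p, hp, q, hq, hne, hz⟩ := hcon z z.2
    exact ⟨(⟨p, hp⟩, ⟨q, hq⟩), hne, hz⟩
  choose f hf1 hf2 using hsel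
  have hinj : Function.Injective f := by
    intro z z' he
    by_contra hne
    have hzz : (z : V) ≠ (z' : V) := fun h => hne (Subtype.ext h)
    have h1 : aline F v w = aline F (z : V) ((z' : V) - (z : V)) :=
      aline_eq z.2 z'.2 hzz
    have h2 : aline F ((f z).1 : V) (((f z).2 : V) - ((f z).1 : V))
        = aline F (z : V) ((z' : V) - (z : V)) := by
      have hz' : (z' : V) ∈ aline F ((f z).1 : V) (((f z).2 : V) - ((f z).1 : V)) := by
        rw [he]; exact hf2 z'
      exact aline_eq (hf2 z) hz' hzz
    have hp : ((f z).1 : V) ∈ aline F v w := by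
      rw [h1, ← h2]; exact mem_aline_self _ _
    exact hdisj _ (f z).1.2 hp
  have hle : #(aline F v w) ≤ #(P × P) := Cardinal.mk_le_of_injective hinj
  have hPP : #(P × P) = #P * #P := by
    simp [Cardinal.mk_prod]
  have hline : Cardinal.lift.{u} #(aline F v w) = Cardinal.lift.{v} #F :=
    Cardinal.mk_range_eq_of_injective (aline_inj hw)
  have hles : Cardinal.lift.{v} #F ≤ Cardinal.lift.{u} #P * Cardinal.lift.{u} #P := by
    rw [← hline, ← Cardinal.lift_mul]
    exact Cardinal.lift_le.mpr (hle.trans_eq hPP)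
  have hF : (ℵ₀ : Cardinal) ≤ Cardinal.lift.{v} #F :=
    Cardinal.aleph0_le_lift.mpr (Cardinal.aleph0_le_mk F)
  exact absurd hles (not_le.mpr (Cardinal.mul_lt_of_lt hF hP hP))

variable (F)

open scoped Classical in
/-- Greedy transfinite construction. -/
noncomputable def bld {ι : Type v} (r : ι → ι → Prop) (wf : WellFounded r)
    (l : ι → V × V) : ι → V :=
  wf.fix fun i IH =>
    if h1 : ∃ p ∈ Set.range (fun j : {j // r j i} => IH j.1 j.2),
        p ∈ aline F (l i).1 (l i).2 then h1.choose
    else if h2 : ∃ z ∈ aline F (l i).1 (l i).2,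
        ∀ p ∈ Set.range (fun j : {j // r j i} => IH j.1 j.2),
        ∀ q ∈ Set.range (fun j : {j // r j i} => IH j.1 j.2),
          p ≠ q → z ∉ aline F p (q - p) then h2.choose
    else (l i).1

open scoped Classical in
lemma bld_eq {ι : Type v} (r : ι → ι → Prop) (wf : WellFounded r)
    (l : ι → V × V) (i : ι) :
    bld F r wf l i =
      (if h1 : ∃ p ∈ Set.range (fun j : {j // r j i} => bld F r wf l j.1),
          p ∈ aline F (l i).1 (l i).2 then h1.choose
      else if h2 : ∃ z ∈ aline F (l i).1 (l i).2,
          ∀ p ∈ Set.range (fun j : {j // r j i} => bld F r wf l j.1),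
          ∀ q ∈ Set.range (fun j : {j // r j i} => bld F r wf l j.1),
            p ≠ q → z ∉ aline F p (q - p) then h2.choose
      else (l i).1) :=
  wf.fix_eq _ i

open scoped Classical in
lemma bld_spec [Infinite F] {ι : Type v} (r : ι → ι → Prop) (wf : WellFounded r)
    (l : ι → V × V) (hl : ∀ i, (l i).2 ≠ 0) (i : ι)
    (hsmall : Cardinal.lift.{u} #{j // r j i} < Cardinal.lift.{v} #F) :
    bld F r wf l i ∈ aline F (l i).1 (l i).2 ∧
      (bld F r wf l i ∈ Set.range (fun j : {j // r j i} => bld F r wf l j.1) ∨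
       ∀ p ∈ Set.range (fun j : {j // r j i} => bld F r wf l j.1),
       ∀ q ∈ Set.range (fun j : {j // r j i} => bld F r wf l j.1),
         p ≠ q → bld F r wf l i ∉ aline F p (q - p)) := by
  have hP : Cardinal.lift.{u} #(Set.range (fun j : {j // r j i} => bld F r wf l j.1))
      < Cardinal.lift.{v} #F :=
    lt_of_le_of_lt (Cardinal.lift_le.mpr (Cardinal.mk_range_le)) hsmall
  rw [bld_eq]
  split_ifs with h1 h2
  · exact ⟨h1.choose_spec.2, Or.inl h1.choose_spec.1⟩
  · exact ⟨h2.choose_spec.1, Or.inr h2.choose_spec.2⟩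
  · exfalso
    apply h2
    push_neg at h1
    exact exists_fresh (hl i) _ hP h1

end Aux

theorem stmt8_aux {F : Type u} {V : Type v} [Field F] [Infinite F] [AddCommGroup V]
    [Module F V] (hdim : Module.rank F V = Cardinal.aleph0) :
    ∃ A : Set V,
      (∀ (v w : V), w ≠ 0 → ∀ x ∈ A, ∀ y ∈ A, ∀ z ∈ A,
        x ∈ Set.range (fun t : F => v + t • w) →
        y ∈ Set.range (fun t : F => v + t • w) →
        z ∈ Set.range (fun t : F => v + t • w) →
        x = y ∨ x = z ∨ y = z) ∧
      (∀ (v w : V), w ≠ 0 → ¬ (Set.range (fun t : F => v + t • w) ⊆ Aᶜ)) := by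
  classical
  -- cardinality of V equals that of F
  have hι0 : #(Module.Basis.ofVectorSpaceIndex F V) = (ℵ₀ : Cardinal) := by
    rw [(Module.Basis.ofVectorSpace F V).mk_eq_rank'', hdim]
  have hne : Nonempty (Module.Basis.ofVectorSpaceIndex F V) := by
    apply Cardinal.mk_ne_zero_iff.mp
    rw [hι0]
    exact Cardinal.aleph0_ne_zero
  have hVF : Cardinal.lift.{u} #V = Cardinal.lift.{v} #F := by
    have h1 : Cardinal.lift.{max v u} #V
        = Cardinal.lift.{v} #(Module.Basis.ofVectorSpaceIndex F V →₀ F) :=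
      Cardinal.lift_mk_eq'.mpr ⟨(Module.Basis.ofVectorSpace F V).repr.toEquiv⟩
    rw [Cardinal.mk_finsupp_lift_of_infinite', hι0] at h1
    simp only [Cardinal.lift_max, Cardinal.lift_aleph0, Cardinal.lift_lift] at h1
    rw [Cardinal.lift_umax] at h1
    rw [h1]
    exact max_eq_right (Cardinal.aleph0_le_lift.mpr (Cardinal.aleph0_le_mk F))
  have hinfV : (ℵ₀ : Cardinal) ≤ #V := by
    have : (ℵ₀ : Cardinal) ≤ Cardinal.lift.{u} #V := by
      rw [hVF]
      exact Cardinal.aleph0_le_lift.mpr (Cardinal.aleph0_le_mk F)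
    exact Cardinal.aleph0_le_lift.mp this
  -- set up the well order on the index type of lines
  obtain ⟨r, wo, hord⟩ := Cardinal.ord_eq (V × {w : V // w ≠ 0})
  haveI := wo
  have wf : WellFounded r := wo.toIsWellFounded.wf
  have hseg : ∀ i : V × {w : V // w ≠ 0},
      Cardinal.lift.{u} #{j // r j i} < Cardinal.lift.{v} #F := by
    intro i
    have h1 : #{j // r j i} < #(V × {w : V // w ≠ 0}) := by
      rw [← Ordinal.card_typein]
      exact Cardinal.card_typein_lt (r := r) i hord
    have h2 : #(V × {w : V // w ≠ 0}) ≤ #V := by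
      rw [Cardinal.mk_prod, Cardinal.lift_id, Cardinal.lift_id]
      calc #V * #{w : V // w ≠ 0} ≤ #V * #V :=
            mul_le_mul' le_rfl (Cardinal.mk_subtype_le _)
        _ = #V := Cardinal.mul_eq_self hinfV
    calc Cardinal.lift.{u} #{j // r j i} < Cardinal.lift.{u} #(V × {w : V // w ≠ 0}) :=
          Cardinal.lift_lt.mpr h1
      _ ≤ Cardinal.lift.{u} #V := Cardinal.lift_le.mpr h2
      _ = Cardinal.lift.{v} #F := hVF
  set l : (V × {w : V // w ≠ 0}) → V × V := fun i => (i.1, (i.2 : V)) with hldef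
  have hl : ∀ i, (l i).2 ≠ 0 := fun i => i.2.2
  set g : (V × {w : V // w ≠ 0}) → V := bld F r wf l with hgdef
  refine ⟨Set.range g, ?_, ?_⟩
  · -- no three distinct collinear points
    rintro v w hw x hx y hy z hz hxL hyL hzL
    by_contra hcon
    push_neg at hcon
    obtain ⟨hxy, hxz, hyz⟩ := hcon
    have hmin : ∀ a ∈ Set.range g, ∃ i, g i = a ∧ ∀ j, r j i → g j ≠ a := by
      rintro a ⟨i0, hi0⟩
      refine ⟨wf.min {i | g i = a} ⟨i0, hi0⟩, wf.min_mem {i | g i = a} ⟨i0, hi0⟩, ?_⟩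
      intro j hj hja
      exact wf.not_lt_min {i | g i = a} hja hj
    obtain ⟨ix, hix, hminx⟩ := hmin x hx
    obtain ⟨iy, hiy, hminy⟩ := hmin y hy
    obtain ⟨iz, hiz, hminz⟩ := hmin z hz
    have helper : ∀ k i j, r i k → r j k → (∀ j', r j' k → g j' ≠ g k) →
        g i ≠ g j → g i ∈ aline F v w → g j ∈ aline F v w → g k ∈ aline F v w →
        False := by
      intro k i j hik hjk hkmin hij hiLn hjLn hkLn
      obtain ⟨-, hB⟩ := bld_spec F r wf l hl k (hseg k)
      rcases hB with hmem | havoid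
      · obtain ⟨⟨j', hj'⟩, hj'eq⟩ := hmem
        exact hkmin j' hj' hj'eq
      · have h1 := havoid (g i) ⟨⟨i, hik⟩, rfl⟩ (g j) ⟨⟨j, hjk⟩, rfl⟩ hij
        apply h1
        rw [← aline_eq hiLn hjLn hij]
        exact hkLn
    have hminx' : ∀ j', r j' ix → g j' ≠ g ix := fun j' h => by
      rw [hix]; exact hminx j' h
    have hminy' : ∀ j', r j' iy → g j' ≠ g iy := fun j' h => by
      rw [hiy]; exact hminy j' h
    have hminz' : ∀ j', r j' iz → g j' ≠ g iz := fun j' h => by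
      rw [hiz]; exact hminz j' h
    have hnexy : g ix ≠ g iy := by rw [hix, hiy]; exact hxy
    have hnexz : g ix ≠ g iz := by rw [hix, hiz]; exact hxz
    have hneyz : g iy ≠ g iz := by rw [hiy, hiz]; exact hyz
    have hixy : ix ≠ iy := fun h => hnexy (by rw [h])
    have hixz : ix ≠ iz := fun h => hnexz (by rw [h])
    have hiyz : iy ≠ iz := fun h => hneyz (by rw [h])
    have hxL' : g ix ∈ aline F v w := by rw [hix]; exact hxL
    have hyL' : g iy ∈ aline F v w := by rw [hiy]; exact hyL
    have hzL' : g iz ∈ aline F v w := by rw [hiz]; exact hzL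
    rcases trichotomous_of r ix iy with h1 | h1 | h1
    · rcases trichotomous_of r iy iz with h2 | h2 | h2
      · exact helper iz ix iy (trans_of r h1 h2) h2 hminz' hnexy hxL' hyL' hzL'
      · exact absurd h2 hiyz
      · exact helper iy ix iz h1 h2 hminy' hnexz hxL' hzL' hyL'
    · exact absurd h1 hixy
    · rcases trichotomous_of r ix iz with h2 | h2 | h2
      · exact helper iz iy ix (trans_of r h1 h2) h2 hminz' hnexy.symm hyL' hxL' hzL'
      · exact absurd h2 hixz
      · exact helper ix iy iz h1 h2 hminx' hneyz hyL' hzL' hxL'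
  · -- no affine line in the complement
    intro v w hw hsub
    have hmem := (bld_spec F r wf l hl (v, ⟨w, hw⟩) (hseg (v, ⟨w, hw⟩))).1
    exact hsub hmem ⟨(v, ⟨w, hw⟩), rfl⟩

theorem stmt8 {F V : Type*} [Field F] [Infinite F] [AddCommGroup V] [Module F V]
    (hdim : Module.rank F V = Cardinal.aleph0) :
    ∃ A : Set V,
      (∀ (v w : V), w ≠ 0 → ∀ x ∈ A, ∀ y ∈ A, ∀ z ∈ A,
        x ∈ Set.range (fun t : F => v + t • w) →
        y ∈ Set.range (fun t : F => v + t • w) →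
        z ∈ Set.range (fun t : F => v + t • w) →
        x = y ∨ x = z ∨ y = z) ∧
      (∀ (v w : V), w ≠ 0 → ¬ (Set.range (fun t : F => v + t • w) ⊆ Aᶜ)) := by
  exact stmt8_aux hdim
end

section
/- Let V and V' be vector spaces over ℚ. An injective map α : V → V' preserves the midpoint relation μ (i.e., for all x,y,z, 2y = x + z iff 2·α(y) = α(x) + α(z)) if and only if α is an affine embedding. -/
theorem stmt11 {V V' : Type*} [AddCommGroup V] [Module ℚ V]
    [AddCommGroup V'] [Module ℚ V'] (α : V → V') (hinj : Function.Injective α) :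
    (∀ x y z : V, (2 : ℚ) • y = x + z ↔ (2 : ℚ) • α y = α x + α z) ↔
      ∃ (w : V') (β : V →ₗ[ℚ] V'), Function.Injective β ∧ ∀ v : V, α v = w + β v := by
  constructor
  · intro h
    have key : ∀ x z : V, α (x + z) + α 0 = α x + α z := by
      intro x z
      set m := (2⁻¹ : ℚ) • (x + z) with hm
      have h1 : (2 : ℚ) • m = x + z := by
        rw [hm, smul_smul]; norm_num
      have h2 : (2 : ℚ) • α m = α x + α z := (h x m z).mp h1
      have h3 : (2 : ℚ) • α m = α (x + z) + α 0 := (h (x + z) m 0).mp (by rw [h1, add_zero])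
      rw [← h2, h3]
    have hadd : ∀ x z : V, α (x + z) - α 0 = (α x - α 0) + (α z - α 0) := by
      intro x z
      have := key x z
      abel_nf
      linear_combination (norm := abel_nf) this
    let f : V →+ V' :=
      { toFun := fun v => α v - α 0
        map_zero' := by simp
        map_add' := hadd }
    refine ⟨α 0, f.toRatLinearMap, ?_, ?_⟩
    · intro a b hab
      simp only [AddMonoidHom.toRatLinearMap, LinearMap.coe_mk, AddHom.coe_mk,
        AddMonoidHom.coe_mk, ZeroHom.coe_mk, f] at hab
      have : α a = α b := by
        have := sub_left_injective.eq_iff.mp hab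
        exact this
      exact hinj this
    · intro v
      simp [AddMonoidHom.toRatLinearMap, f]
  · rintro ⟨w, β, hβ, hαβ⟩
    intro x y z
    simp only [hαβ]
    constructor
    · intro hxyz
      have hb : β ((2:ℚ) • y) = β (x + z) := by rw [hxyz]
      rw [β.map_smul, β.map_add, two_smul] at hb
      rw [two_smul]
      linear_combination (norm := abel_nf) hb
    · intro hx
      have hb : β ((2:ℚ) • y) = β (x + z) := by
        rw [β.map_smul, β.map_add]
        have h2 : (2:ℚ) • (w + β y) = (w + β x) + (w + β z) := hx
        rw [two_smul] at h2 ⊢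
        linear_combination (norm := abel_nf) h2
      exact hβ hb
end

section
/- Let G be a torsion-free abelian group and F ⊆ G a finite subset. Then there exists a map f : F → ℕ such that for all x, y, z ∈ F, 2y = x + z (in G) if and only if 2·f(y) = f(x) + f(z) (in ℕ). -/
lemma digits_zero (N : ℤ) : ∀ (n : ℕ) (v : Fin n → ℤ), (∀ i, |v i| < N) →
    (∑ i, v i * N ^ (i : ℕ)) = 0 → ∀ i, v i = 0 := by
  intro n
  induction n with
  | zero => exact fun v _ _ i => i.elim0
  | succ n ih =>
    intro v hb h i
    have hN : 0 < N := lt_of_le_of_lt (abs_nonneg _) (hb 0)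
    have hsum : v 0 + N * ∑ j : Fin n, v j.succ * N ^ (j : ℕ) = 0 := by
      rw [← h, Fin.sum_univ_succ, Finset.mul_sum]
      simp only [Fin.val_zero, pow_zero, mul_one, Fin.val_succ, pow_succ]
      congr 1
      apply Finset.sum_congr rfl
      intro j _
      ring
    have hv0 : v 0 = 0 := by
      have hdvd : N ∣ v 0 := ⟨-∑ j : Fin n, v j.succ * N ^ (j : ℕ), by linarith⟩
      exact Int.eq_zero_of_abs_lt_dvd hdvd (hb 0)
    have hS : ∑ j : Fin n, v j.succ * N ^ (j : ℕ) = 0 := by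
      have : N * ∑ j : Fin n, v j.succ * N ^ (j : ℕ) = 0 := by linarith
      exact (mul_eq_zero.mp this).resolve_left hN.ne'
    have := ih (fun j => v j.succ) (fun j => hb j.succ) hS
    rcases Fin.eq_zero_or_eq_succ i with rfl | ⟨j, rfl⟩
    · exact hv0
    · exact this j

theorem stmt12 {G : Type*} [AddCommGroup G] [NoZeroSMulDivisors ℤ G]
    (F : Finset G) :
    ∃ f : G → ℕ, ∀ x ∈ F, ∀ y ∈ F, ∀ z ∈ F,
      (y + y = x + z ↔ f y + f y = f x + f z) := by
  classical
  set M := Submodule.span ℤ (F : Set G) with hMdef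
  haveI : Module.Finite ℤ M := Module.Finite.span_of_finite ℤ F.finite_toSet
  haveI : Module.Free ℤ M := Module.free_of_finite_type_torsion_free'
  set n := Fintype.card (Module.Free.ChooseBasisIndex ℤ M) with hn
  let b : Module.Basis (Fin n) ℤ M :=
    (Module.Free.chooseBasis ℤ M).reindex (Fintype.equivFin _)
  -- elements of F as elements of M
  have hmem : ∀ x ∈ F, x ∈ M := fun x hx => Submodule.subset_span hx
  let m : ∀ x ∈ F, M := fun x hx => ⟨x, hmem x hx⟩
  -- coordinate bound
  set C : ℕ := F.attach.sup
    (fun x => Finset.univ.sup (fun i : Fin n => (b.repr (m x.1 x.2) i).natAbs)) with hC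
  have hCb : ∀ x (hx : x ∈ F), ∀ i : Fin n, |b.repr (m x hx) i| ≤ (C : ℤ) := by
    intro x hx i
    rw [Int.abs_eq_natAbs]
    have h1 : ((b.repr (m x hx)) i).natAbs ≤
        Finset.univ.sup (fun j : Fin n => ((b.repr (m x hx)) j).natAbs) :=
      Finset.le_sup (f := fun j : Fin n => ((b.repr (m x hx)) j).natAbs) (Finset.mem_univ i)
    have h2 := Finset.le_sup
      (f := fun x : {a // a ∈ F} => Finset.univ.sup
        (fun j : Fin n => ((b.repr (m x.1 x.2)) j).natAbs))
      (Finset.mem_attach F ⟨x, hx⟩)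
    exact_mod_cast le_trans h1 h2
  set N : ℤ := 4 * C + 1 with hN
  -- the embedding into ℤ
  let ψ : M → ℤ := fun u => ∑ i : Fin n, b.repr u i * N ^ (i : ℕ)
  have hψadd : ∀ u v : M, ψ (u + v) = ψ u + ψ v := by
    intro u v
    simp only [ψ, map_add, Finsupp.add_apply, add_mul, Finset.sum_add_distrib]
  -- key equivalence
  have key : ∀ x (hx : x ∈ F), ∀ y (hy : y ∈ F), ∀ z (hz : z ∈ F),
      (y + y = x + z ↔ ψ (m y hy) + ψ (m y hy) = ψ (m x hx) + ψ (m z hz)) := by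
    intro x hx y hy z hz
    constructor
    · intro h
      have hM : m y hy + m y hy = m x hx + m z hz := Subtype.ext h
      rw [← hψadd, ← hψadd, hM]
    · intro h
      set v : Fin n → ℤ := fun i =>
        b.repr (m y hy) i + b.repr (m y hy) i - b.repr (m x hx) i - b.repr (m z hz) i with hv
      have hsum : ∑ i, v i * N ^ (i : ℕ) = 0 := by
        simp only [hv, sub_mul, add_mul, Finset.sum_sub_distrib, Finset.sum_add_distrib]
        simp only [ψ] at h
        linarith
      have hbnd : ∀ i, |v i| < N := by
        intro i
        have h1 := hCb y hy i
        have h2 := hCb x hx i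
        have h3 := hCb z hz i
        rw [abs_le] at h1 h2 h3
        rw [hN, abs_lt]
        constructor <;> simp only [hv] <;> linarith
      have hz0 := digits_zero N n v hbnd hsum
      have hrepr : b.repr (m y hy + m y hy) = b.repr (m x hx + m z hz) := by
        ext i
        have := hz0 i
        simp only [hv] at this
        simp only [map_add, Finsupp.add_apply]
        linarith
      have := b.repr.injective hrepr
      exact congrArg Subtype.val this
  -- shift into ℕ
  set D : ℕ := F.attach.sup (fun x => (ψ (m x.1 x.2)).natAbs) with hD
  have hDb : ∀ x (hx : x ∈ F), |ψ (m x hx)| ≤ (D : ℤ) := by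
    intro x hx
    rw [Int.abs_eq_natAbs]
    have h2 := Finset.le_sup
      (f := fun x : {a // a ∈ F} => (ψ (m x.1 x.2)).natAbs)
      (Finset.mem_attach F ⟨x, hx⟩)
    exact_mod_cast h2
  refine ⟨fun g => if h : g ∈ F then (ψ (m g h) + D).toNat else 0, ?_⟩
  intro x hx y hy z hz
  simp only [dif_pos hx, dif_pos hy, dif_pos hz]
  have px : 0 ≤ ψ (m x hx) + D := by have := (abs_le.mp (hDb x hx)).1; linarith
  have py : 0 ≤ ψ (m y hy) + D := by have := (abs_le.mp (hDb y hy)).1; linarith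
  have pz : 0 ≤ ψ (m z hz) + D := by have := (abs_le.mp (hDb z hz)).1; linarith
  rw [key x hx y hy z hz]
  constructor
  · intro h
    omega
  · intro h
    have : ((ψ (m y hy) + D).toNat : ℤ) + ((ψ (m y hy) + D).toNat : ℤ)
        = ((ψ (m x hx) + D).toNat : ℤ) + ((ψ (m z hz) + D).toNat : ℤ) := by exact_mod_cast h
    rw [Int.toNat_of_nonneg px, Int.toNat_of_nonneg py, Int.toNat_of_nonneg pz] at this
    linarith
end

section
/- Let R be a countable set with a ternary relation μ' such that every finite subset of (R, μ') embeds into the midpoint structure of a ℚ-vector space V (preserving and reflecting the relation). Let V' = ℚ^[R] be the free ℚ-vector space on R with canonical basis δ, and let W ⊆ V' be the subspace spanned by {δ(x) + δ(z) − 2δ(y) : (x,y,z) ∈ μ'}. Then the composite map ρ' : R → V'/W of δ with the quotient map is injective and satisfies: (x,y,z) ∈ μ' if and only if 2·ρ'(y) = ρ'(x) + ρ'(z) in V'/W. -/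
/-- The subspace of the free `ℚ`-vector space on `R` spanned by the vectors
`δ x + δ z - 2 δ y` for `(x, y, z)` in the ternary relation `μ'`. -/
noncomputable def midSpan {R : Type*} (μ' : R → R → R → Prop) : Submodule ℚ (R →₀ ℚ) :=
  Submodule.span ℚ
    {v : R →₀ ℚ | ∃ x y z : R, μ' x y z ∧
      v = Finsupp.single x 1 + Finsupp.single z 1 - (2 : ℚ) • Finsupp.single y 1}

lemma midSpan_total {R : Type*} (μ' : R → R → R → Prop)
    {V : Type*} [AddCommGroup V] [Module ℚ V]
    {v : R →₀ ℚ} (hv : v ∈ midSpan μ') :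
    ∃ F : Finset R, ∀ f : R → V,
      (∀ x ∈ F, ∀ y ∈ F, ∀ z ∈ F, μ' x y z → (2 : ℚ) • f y = f x + f z) →
      Finsupp.linearCombination ℚ f v = 0 := by
  classical
  induction hv using Submodule.span_induction with
  | mem v hv =>
    obtain ⟨x, y, z, hxyz, rfl⟩ := hv
    refine ⟨{x, y, z}, fun f hf => ?_⟩
    have h := hf x (by simp) y (by simp) z (by simp) hxyz
    simp only [map_sub, map_add, map_smul, Finsupp.linearCombination_single, one_smul]
    rw [sub_eq_zero, ← h]
  | zero => exact ⟨∅, fun f _ => by simp⟩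
  | add v w _ _ ihv ihw =>
    obtain ⟨F₁, h₁⟩ := ihv; obtain ⟨F₂, h₂⟩ := ihw
    refine ⟨F₁ ∪ F₂, fun f hf => ?_⟩
    rw [map_add,
      h₁ f (fun x hx y hy z hz => hf x (Finset.mem_union_left _ hx)
        y (Finset.mem_union_left _ hy) z (Finset.mem_union_left _ hz)),
      h₂ f (fun x hx y hy z hz => hf x (Finset.mem_union_right _ hx)
        y (Finset.mem_union_right _ hy) z (Finset.mem_union_right _ hz)), add_zero]
  | smul a v _ ih =>
    obtain ⟨F, h⟩ := ih
    exact ⟨F, fun f hf => by rw [map_smul, h f hf, smul_zero]⟩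

theorem stmt18 {R : Type*} [Countable R] (μ' : R → R → R → Prop)
    {V : Type*} [AddCommGroup V] [Module ℚ V]
    (hage : ∀ F : Finset R, ∃ f : R → V, Set.InjOn f ↑F ∧
      ∀ x ∈ F, ∀ y ∈ F, ∀ z ∈ F, (μ' x y z ↔ (2 : ℚ) • f y = f x + f z)) :
    Function.Injective
        (fun r : R =>
          (Submodule.Quotient.mk (Finsupp.single r 1) : (R →₀ ℚ) ⧸ midSpan μ')) ∧
      ∀ x y z : R,
        (μ' x y z ↔
          (2 : ℚ) • (Submodule.Quotient.mk (Finsupp.single y 1) : (R →₀ ℚ) ⧸ midSpan μ') =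
            Submodule.Quotient.mk (Finsupp.single x 1) +
              Submodule.Quotient.mk (Finsupp.single z 1)) := by
  classical
  constructor
  · intro r s h
    simp only [Submodule.Quotient.eq] at h
    obtain ⟨F, hF⟩ := midSpan_total (V := V) μ' h
    obtain ⟨f, hinj, hf⟩ := hage (insert r (insert s F))
    have := hF f (fun x hx y hy z hz hxyz =>
      (hf x (by simp [hx]) y (by simp [hy]) z (by simp [hz])).mp hxyz)
    simp only [map_sub, Finsupp.linearCombination_single, one_smul, sub_eq_zero] at this
    exact hinj (by simp) (by simp) this
  · intro x y z
    constructor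
    · intro h
      have hmem : Finsupp.single x 1 + Finsupp.single z 1 - (2 : ℚ) • Finsupp.single y 1
          ∈ midSpan μ' := Submodule.subset_span ⟨x, y, z, h, rfl⟩
      rw [← Submodule.Quotient.mk_smul, ← Submodule.Quotient.mk_add,
        Submodule.Quotient.eq]
      simpa [neg_sub] using (midSpan μ').neg_mem hmem
    · intro h
      rw [← Submodule.Quotient.mk_smul, ← Submodule.Quotient.mk_add,
        Submodule.Quotient.eq] at h
      have hmem : Finsupp.single x 1 + Finsupp.single z 1 - (2 : ℚ) • Finsupp.single y 1
          ∈ midSpan μ' := by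
        simpa [neg_sub] using (midSpan μ').neg_mem h
      obtain ⟨F, hF⟩ := midSpan_total (V := V) μ' hmem
      obtain ⟨f, hinj, hf⟩ := hage (insert x (insert y (insert z F)))
      have h0 := hF f (fun a ha b hb c hc habc =>
        (hf a (by simp [ha]) b (by simp [hb]) c (by simp [hc])).mp habc)
      simp only [map_sub, map_add, map_smul, Finsupp.linearCombination_single, one_smul,
        sub_eq_zero] at h0
      exact (hf x (by simp) y (by simp) z (by simp)).mpr h0.symm
end

section
/- Let F_q be a finite field, let k ∈ ℕ, let W be a subspace of F_q^[ω] of dimension at least k+1, and let v ∈ F_q^[ω] with max(supp v) < min(supp W). Suppose Δ : F_q^[ω] → {red, blue} is a coloring such that Δ(v) = blue, the affine space v + W contains no red affine subspace of dimension k, and Δ is end-determined on v + W (for each nonzero a ∈ F_q, all f ∈ v + W with f(max supp f) = a receive the same color). Then every element of v + W is colored blue. -/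
set_option maxHeartbeats 1000000
set_option synthInstance.maxHeartbeats 400000

lemma maxsupp_eq_aux {F : Type*} [Zero F] (g : ℕ →₀ F) (d : ℕ) (h1 : g d ≠ 0)
    (h2 : ∀ n, d < n → g n = 0) (hne : g.support.Nonempty) :
    g.support.max' hne = d := by
  apply le_antisymm
  · apply Finset.max'_le
    intro y hy
    by_contra hc
    exact Finsupp.mem_support_iff.mp hy (h2 y (by omega))
  · exact Finset.le_max' _ _ (Finsupp.mem_support_iff.mpr h1)

lemma ker_eval_aux {F : Type*} [Field F] (V : Submodule F (ℕ →₀ F))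
    [FiniteDimensional F V] (d : ℕ) (e : ℕ →₀ F) (heV : e ∈ V) (hed : e d ≠ 0) :
    ∃ U : Submodule F (ℕ →₀ F), U ≤ V ∧
      Module.finrank F U + 1 = Module.finrank F V ∧
      ∀ u ∈ U, (u : ℕ →₀ F) d = 0 := by
  let φ : V →ₗ[F] F :=
    { toFun := fun x => (x : ℕ →₀ F) d
      map_add' := fun x y => by simp
      map_smul' := fun c x => by simp }
  have hφsurj : Function.Surjective φ := by
    intro c
    refine ⟨(c * (e d)⁻¹) • ⟨e, heV⟩, ?_⟩
    show ((c * (e d)⁻¹) • e) d = c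
    rw [Finsupp.smul_apply, smul_eq_mul]
    field_simp
  refine ⟨(LinearMap.ker φ).map V.subtype, Submodule.map_subtype_le _ _, ?_, ?_⟩
  · have h1 := LinearMap.finrank_range_add_finrank_ker (K := F) (V := ↥V) (V₂ := F) φ
    have h3 := Submodule.finrank_map_subtype_eq V (LinearMap.ker φ)
    rw [← h3] at h1
    rw [LinearMap.range_eq_top.mpr hφsurj, finrank_top, Module.finrank_self] at h1
    omega
  · intro u hu
    rw [Submodule.mem_map] at hu
    obtain ⟨x, hx, rfl⟩ := hu
    have hx' : φ x = 0 := hx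
    exact hx'

theorem stmt19 {F : Type*} [Field F] [Fintype F] (k : ℕ)
    (W : Submodule F (ℕ →₀ F)) (hdim : (k + 1 : Cardinal) ≤ Module.rank F W)
    (v : ℕ →₀ F)
    (hvW : ∀ m ∈ v.support, ∀ w ∈ W, ∀ n ∈ (w : ℕ →₀ F).support, m < n)
    (Δ : (ℕ →₀ F) → Bool)  -- `true` = blue, `false` = red
    (hv : Δ v = true)
    (hnored : ¬ ∃ w₀ ∈ W, ∃ U : Submodule F (ℕ →₀ F), U ≤ W ∧
      Module.finrank F U = k ∧ ∀ u ∈ U, Δ (v + w₀ + u) = false)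
    (hend : ∀ (f g : ℕ →₀ F), f - v ∈ W → g - v ∈ W →
      ∀ (hf : f ≠ 0) (hg : g ≠ 0),
        f (f.support.max' (Finsupp.support_nonempty_iff.mpr hf)) =
          g (g.support.max' (Finsupp.support_nonempty_iff.mpr hg)) →
        Δ f = Δ g) :
    ∀ w ∈ W, Δ (v + w) = true := by
  classical
  by_contra hcon
  push_neg at hcon
  obtain ⟨w, hwW, hwred⟩ := hcon
  replace hwred : Δ (v + w) = false := by simpa using hwred
  have hw0 : w ≠ 0 := by rintro rfl; rw [add_zero, hv] at hwred; simp at hwred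
  have hwsupp : w.support.Nonempty := Finsupp.support_nonempty_iff.mpr hw0
  set m₀ := w.support.max' hwsupp with hm₀
  have hwm₀ : w m₀ ≠ 0 := Finsupp.mem_support_iff.mp (w.support.max'_mem hwsupp)
  have hwhigh : ∀ n, m₀ < n → w n = 0 := by
    intro n hn
    by_contra h
    exact absurd (Finset.le_max' _ n (Finsupp.mem_support_iff.mpr h)) (by omega)
  have hv0 : ∀ n₀, (∃ x ∈ W, (x : ℕ →₀ F) n₀ ≠ 0) → ∀ n, n₀ ≤ n → v n = 0 := by
    rintro n₀ ⟨x, hx, hxn⟩ n hn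
    by_contra h
    have := hvW n (Finsupp.mem_support_iff.mpr h) x hx n₀ (Finsupp.mem_support_iff.mpr hxn)
    omega
  have hvm₀ : ∀ n, m₀ ≤ n → v n = 0 := hv0 m₀ ⟨w, hwW, hwm₀⟩
  set f := v + w with hf
  have hfd : f m₀ ≠ 0 := by
    simp only [hf, Finsupp.add_apply, hvm₀ m₀ le_rfl, zero_add]
    exact hwm₀
  have hfhigh : ∀ n, m₀ < n → f n = 0 := by
    intro n hn
    simp only [hf, Finsupp.add_apply, hvm₀ n (le_of_lt hn), hwhigh n hn, add_zero]
  have hfne : f ≠ 0 := fun h => hfd (by rw [h]; rfl)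
  have hfmax : f.support.max' (Finsupp.support_nonempty_iff.mpr hfne) = m₀ :=
    maxsupp_eq_aux f m₀ hfd hfhigh _
  set a := w m₀ with ha
  -- extract k+1 linearly independent vectors in W
  have hdim' : ((k + 1 : ℕ) : Cardinal) ≤ Module.rank F W := by push_cast; exact hdim
  have : Module.Free F W := Module.Free.of_divisionRing F W
  obtain ⟨s, hscard, hsli⟩ :=
    (le_rank_iff_exists_linearIndependent_finset (K := F) (V := W)).mp (by exact hdim')
  -- push them to the ambient space
  have hli : LinearIndependent F
      (fun x => x : (W.subtype '' (s : Set W)) → (ℕ →₀ F)) :=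
    by have := LinearIndepOn.image (f := W.subtype) hsli (by simp); exact this
  set t : Finset (ℕ →₀ F) := s.image Subtype.val with ht
  have htcoe : (t : Set (ℕ →₀ F)) = W.subtype '' (s : Set W) := by
    simp [ht, Finset.coe_image, Submodule.coe_subtype]
  have htcard : t.card = k + 1 := by
    rw [ht, Finset.card_image_of_injective _ Subtype.val_injective, hscard]
  have hli' : LinearIndependent F (fun x : (t : Set (ℕ →₀ F)) => x.1) := by
    rw [htcoe]; exact hli
  set V : Submodule F (ℕ →₀ F) := Submodule.span F (t : Set (ℕ →₀ F)) with hV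
  have hVW : V ≤ W := by
    rw [hV, Submodule.span_le, htcoe]
    rintro x ⟨y, hy, rfl⟩
    exact y.2
  have hVrank : Module.finrank F V = k + 1 := by
    rw [hV, finrank_span_finset_eq_card hli', htcard]
  -- support bound for V
  set D : Finset ℕ := t.sup (fun g => g.support) with hD
  have hsuppV : ∀ x ∈ V, (x : ℕ →₀ F).support ⊆ D := by
    intro x hx
    induction hx using Submodule.span_induction with
    | mem y hy => exact Finset.le_sup (f := fun g : ℕ →₀ F => g.support) hy
    | zero => simp
    | add y z _ _ hy hz => exact (Finsupp.support_add).trans (Finset.union_subset hy hz)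
    | smul c y _ hy => exact (Finsupp.support_smul).trans hy
  set T : Finset ℕ := D.filter (fun n => ∃ x ∈ V, (x : ℕ →₀ F) n ≠ 0) with hT
  have hnT : ∀ n : ℕ, (∃ x ∈ V, (x : ℕ →₀ F) n ≠ 0) → n ∈ T := by
    rintro n ⟨x, hx, hxn⟩
    rw [hT, Finset.mem_filter]
    exact ⟨hsuppV x hx (Finsupp.mem_support_iff.mpr hxn), x, hx, hxn⟩
  have hTne : T.Nonempty := by
    have htne : t.Nonempty := Finset.card_pos.mp (by omega)
    obtain ⟨g, hg⟩ := htne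
    have hgV : g ∈ V := Submodule.subset_span hg
    have hg0 : g ≠ 0 := hli'.ne_zero ⟨g, by exact_mod_cast hg⟩
    obtain ⟨n, hn⟩ := Finsupp.support_nonempty_iff.mpr hg0
    exact ⟨n, hnT n ⟨g, hgV, Finsupp.mem_support_iff.mp hn⟩⟩
  set d : ℕ := T.max' hTne with hd
  have hdT : d ∈ T := T.max'_mem hTne
  rw [hT, Finset.mem_filter] at hdT
  obtain ⟨-, e, heV, hed⟩ := hdT
  have hVhigh : ∀ x ∈ V, ∀ n, d < n → (x : ℕ →₀ F) n = 0 := by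
    intro x hx n hn
    by_contra h
    exact absurd (Finset.le_max' _ n (hnT n ⟨x, hx, h⟩)) (by omega)
  -- the kernel of evaluation at d
  haveI : FiniteDimensional F V := by rw [hV]; infer_instance
  obtain ⟨U, hUV, hUrank', hUd⟩ := ker_eval_aux V d e heV hed
  have hUrank : Module.finrank F U = k := by rw [hVrank] at hUrank'; omega
  -- a ≠ 0
  have ha0 : a ≠ 0 := hwm₀
  set w₀ : ℕ →₀ F := (a * (e d)⁻¹) • e with hw₀
  have hw₀V : w₀ ∈ V := Submodule.smul_mem V _ heV
  have hvd : ∀ n, d ≤ n → v n = 0 := hv0 d ⟨e, hVW heV, hed⟩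
  refine hnored ⟨w₀, hVW hw₀V, U, le_trans hUV hVW, hUrank, ?_⟩
  intro u hu
  have huV : u ∈ V := hUV hu
  have hud : u d = 0 := hUd u hu
  set g : ℕ →₀ F := v + w₀ + u with hg
  have hgd : g d = a := by
    simp only [hg, Finsupp.add_apply, hvd d le_rfl, hud, hw₀, Finsupp.smul_apply, smul_eq_mul,
      zero_add, add_zero]
    field_simp
  have hgd0 : g d ≠ 0 := by rw [hgd]; exact ha0
  have hghigh : ∀ n, d < n → g n = 0 := by
    intro n hn
    have h1 : w₀ n = 0 := hVhigh w₀ hw₀V n hn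
    have h2 : u n = 0 := hVhigh u huV n hn
    simp only [hg, Finsupp.add_apply, hvd n (le_of_lt hn), h1, h2, add_zero]
  have hgne : g ≠ 0 := fun h => hgd0 (by rw [h]; rfl)
  have hgmax : g.support.max' (Finsupp.support_nonempty_iff.mpr hgne) = d :=
    maxsupp_eq_aux g d hgd0 hghigh _
  have hfW : f - v ∈ W := by rw [hf, add_sub_cancel_left]; exact hwW
  have hgW : g - v ∈ W := by
    rw [hg, add_assoc, add_sub_cancel_left]
    exact W.add_mem (hVW hw₀V) ((le_trans hUV hVW) hu)
  have hfm : f m₀ = a := by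
    simp only [hf, Finsupp.add_apply, hvm₀ m₀ le_rfl, zero_add, ha]
  have key := hend f g hfW hgW hfne hgne (by rw [hfmax, hgmax, hgd, hfm])
  rw [hg, ← key]
  exact hwred
end
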